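/- arXiv:2002.08337 — 3 statements merged into one kernel-verified Lean document; each statement's English description precedes it below -/
import Mathlib

section
/- For any finite non-empty connected subset C of Z^2 which does not touch the boundary of the box Λ(n), the external edge boundary of C (the edges connecting C to the infinite component of its complement) has cardinality at least 1 + diam(C), which is at least sqrt(|C|). -/
open scoped Classical BigOperators

noncomputable section

/-- Vertices of the square lattice `ℤ²`. -/
abbrev V : Type := ℤ × ℤ

/-- Nearest-neighbour adjacency on `ℤ²` (ℓ¹-distance one). -/
def adjV (x y : V) : Prop := (x.1 - y.1).natAbs + (x.2 - y.2).natAbs = 1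

/-- The box `Λ(n) = [-n/2, n/2)² ∩ ℤ²` of side `n`. -/
def Lam (n : ℕ) : Finset V :=
  (Finset.Ico (-((n : ℤ) / 2)) ((n : ℤ) - (n : ℤ) / 2)) ×ˢ
    (Finset.Ico (-((n : ℤ) / 2)) ((n : ℤ) - (n : ℤ) / 2))

/-- The (interior) boundary `∂Λ(n)` of the box. -/
def bdry (n : ℕ) : Finset V :=
  (Lam n).filter fun x => ∃ y : V, adjV x y ∧ y ∉ Lam n

/-- Connectivity in the complement of `C`. -/
def connAvoid (C : Finset V) (x y : V) : Prop :=
  Relation.ReflTransGen (fun a b => adjV a b ∧ a ∉ C ∧ b ∉ C) x y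

/-- The infinite connected component of the complement of `C`. -/
def infComp (C : Finset V) : Set V :=
  {y | y ∉ C ∧ {z : V | connAvoid C y z}.Infinite}

/-- The external edge boundary `∂^ext C`: edges joining `C` to the infinite
component of its complement. -/
def extBdryE (C : Finset V) : Set (Sym2 V) :=
  {e | ∃ x y : V, e = s(x, y) ∧ adjV x y ∧ x ∈ C ∧ y ∈ infComp C}

/-- The ℓ∞-diameter of a finite set of vertices. -/
def diamF (C : Finset V) : ℕ :=
  C.sup fun x => C.sup fun y => max (x.1 - y.1).natAbs (x.2 - y.2).natAbs

/-- `C` is a connected set of vertices (for nearest-neighbour adjacency). -/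
def FinConnected (C : Finset V) : Prop :=
  ∀ x ∈ C, ∀ y ∈ C,
    Relation.ReflTransGen (fun a b => adjV a b ∧ a ∈ C ∧ b ∈ C) x y

lemma adj_cases' {x y : V} (h : adjV x y) :
    y = (x.1+1, x.2) ∨ y = (x.1-1, x.2) ∨ y = (x.1, x.2+1) ∨ y = (x.1, x.2-1) := by
  obtain ⟨a,b⟩ := x; obtain ⟨c,d⟩ := y
  simp only [adjV, Prod.mk.injEq] at *
  omega

lemma extBdryE_finite (C : Finset V) : (extBdryE C).Finite := by
  apply Set.Finite.subset (Finset.finite_toSet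
    ((C ×ˢ (C.biUnion fun x => {(x.1+1,x.2),(x.1-1,x.2),(x.1,x.2+1),(x.1,x.2-1)})).image
      fun p => s(p.1, p.2)))
  rintro e ⟨x, y, rfl, hadj, hx, hy⟩
  simp only [Finset.coe_image, Set.mem_image, Finset.mem_coe, Finset.mem_product,
    Finset.mem_biUnion]
  refine ⟨(x, y), ⟨hx, x, hx, ?_⟩, rfl⟩
  rcases adj_cases' hadj with h|h|h|h <;> simp [h]

/-- intermediate value along a connected path -/
lemma ival (C : Finset V) (f : V → ℤ) (hf : ∀ a b : V, adjV a b → (f a - f b).natAbs ≤ 1)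
    {x y : V} (hx : x ∈ C)
    (h : Relation.ReflTransGen (fun a b => adjV a b ∧ a ∈ C ∧ b ∈ C) x y)
    {k : ℤ} (h1 : f x ≤ k) (h2 : k ≤ f y) : ∃ z ∈ C, f z = k := by
  induction h with
  | refl => exact ⟨x, hx, le_antisymm h1 h2⟩
  | @tail b c hab hbc ih =>
    have hd := hf b c hbc.1
    by_cases hk : k ≤ f b
    · exact ih hk
    · exact ⟨c, hbc.2.2, by omega⟩

lemma ray_up (C : Finset V) (k y0 : ℤ) (h : ∀ y : ℤ, y0 ≤ y → ((k, y) : V) ∉ C) :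
    ((k, y0) : V) ∈ infComp C := by
  refine ⟨h y0 le_rfl, ?_⟩
  apply Set.infinite_of_injective_forall_mem (f := fun m : ℕ => ((k, y0 + m) : V))
  case hi =>
    intro a b hab
    simp only [Prod.mk.injEq] at hab
    omega
  case hf =>
    intro m
    induction m with
    | zero => simp only [Nat.cast_zero, add_zero, Set.mem_setOf_eq]; exact Relation.ReflTransGen.refl
    | succ m ih =>
      have : ((k, y0 + (m+1:ℕ)) : V) = (k, (y0 + m) + 1) := by push_cast; ring_nf
      rw [this]
      refine Relation.ReflTransGen.tail ih ⟨?_, h _ (by omega), h _ (by push_cast; omega)⟩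
      simp only [adjV]; omega

lemma ray_right (C : Finset V) (x0 k : ℤ) (h : ∀ x : ℤ, x0 ≤ x → ((x, k) : V) ∉ C) :
    ((x0, k) : V) ∈ infComp C := by
  refine ⟨h x0 le_rfl, ?_⟩
  apply Set.infinite_of_injective_forall_mem (f := fun m : ℕ => ((x0 + m, k) : V))
  case hi =>
    intro a b hab
    simp only [Prod.mk.injEq] at hab
    omega
  case hf =>
    intro m
    induction m with
    | zero => simp only [Nat.cast_zero, add_zero, Set.mem_setOf_eq]; exact Relation.ReflTransGen.refl
    | succ m ih =>
      have : ((x0 + (m+1:ℕ), k) : V) = ((x0 + m) + 1, k) := by push_cast; ring_nf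
      rw [this]
      refine Relation.ReflTransGen.tail ih ⟨?_, h _ (by omega), h _ (by push_cast; omega)⟩
      simp only [adjV]; omega

lemma key1 (C : Finset V) (hconn : FinConnected C) (p q : V) (hp : p ∈ C) (hq : q ∈ C)
    (hd : (p.1 - q.1).natAbs = diamF C) : diamF C + 1 ≤ (extBdryE C).ncard := by
  set D := diamF C with hD
  set a : ℤ := min p.1 q.1 with ha
  have hadj1 : ∀ x y : V, adjV x y → ((x.1 : ℤ) - y.1).natAbs ≤ 1 := by
    intro x y h; simp only [adjV] at h; omega
  have hcols : ∀ k : ℤ, a ≤ k → k ≤ a + D → ∃ z ∈ C, z.1 = k := by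
    intro k hk1 hk2
    rcases le_total q.1 p.1 with h | h
    · exact ival C Prod.fst hadj1 hq (hconn q hq p hp) (by omega) (by omega)
    · exact ival C Prod.fst hadj1 hp (hconn p hp q hq) (by omega) (by omega)
  -- top of each column
  set g : ℤ → ℤ := fun k =>
    if h : ((C.filter (fun z => z.1 = k)).image Prod.snd).Nonempty then
      Finset.max' _ h else 0 with hg
  have hgood : ∀ k : ℤ, a ≤ k → k ≤ a + D →
      ((k, g k) : V) ∈ C ∧ ∀ y : ℤ, g k < y → ((k, y) : V) ∉ C := by
    intro k hk1 hk2
    obtain ⟨z, hz, hz1⟩ := hcols k hk1 hk2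
    have hne' : ((C.filter (fun w => w.1 = k)).image Prod.snd).Nonempty :=
      ⟨z.2, Finset.mem_image.2 ⟨z, Finset.mem_filter.2 ⟨hz, hz1⟩, rfl⟩⟩
    have hgk : g k = Finset.max' _ hne' := by rw [hg]; simp [hne']
    constructor
    · have := Finset.max'_mem _ hne'
      rw [← hgk] at this
      obtain ⟨w, hw, hw2⟩ := Finset.mem_image.1 this
      obtain ⟨hwC, hwk⟩ := Finset.mem_filter.1 hw
      have : w = ((k, g k) : V) := by
        obtain ⟨w1, w2⟩ := w; simp_all
      rwa [← this]
    · intro y hy hmem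
      have : y ∈ (C.filter (fun w => w.1 = k)).image Prod.snd :=
        Finset.mem_image.2 ⟨(k, y), Finset.mem_filter.2 ⟨hmem, rfl⟩, rfl⟩
      have := Finset.le_max' _ y this
      rw [← hgk] at this
      omega
  set e : ℤ → Sym2 V := fun k => s(((k, g k) : V), ((k, g k + 1) : V)) with he
  have hedge : ∀ k : ℤ, a ≤ k → k ≤ a + D → e k ∈ extBdryE C := by
    intro k hk1 hk2
    obtain ⟨h1, h2⟩ := hgood k hk1 hk2
    refine ⟨(k, g k), (k, g k + 1), rfl, by simp only [adjV]; omega, h1, ?_⟩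
    exact ray_up C k (g k + 1) (fun y hy => h2 y (by omega))
  have hinj : ∀ k₁ k₂ : ℤ, e k₁ = e k₂ → k₁ = k₂ := by
    intro k₁ k₂ h
    rw [he] at h
    simp only [Sym2.eq_iff, Prod.mk.injEq] at h
    omega
  have hsubset : ↑((Finset.Icc a (a + D)).image e) ⊆ extBdryE C := by
    intro x hx
    simp only [Finset.coe_image, Set.mem_image, Finset.mem_coe, Finset.mem_Icc] at hx
    obtain ⟨k, ⟨hk1, hk2⟩, rfl⟩ := hx
    exact hedge k hk1 hk2
  have hcard : ((Finset.Icc a (a + D)).image e).card = D + 1 := by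
    rw [Finset.card_image_of_injOn (fun x _ y _ h => hinj x y h), Int.card_Icc]
    omega
  calc D + 1 = (↑((Finset.Icc a (a + D)).image e) : Set (Sym2 V)).ncard := by
        rw [Set.ncard_coe_finset, hcard]
    _ ≤ (extBdryE C).ncard := Set.ncard_le_ncard hsubset (extBdryE_finite C)

lemma key2 (C : Finset V) (hconn : FinConnected C) (p q : V) (hp : p ∈ C) (hq : q ∈ C)
    (hd : (p.2 - q.2).natAbs = diamF C) : diamF C + 1 ≤ (extBdryE C).ncard := by
  set D := diamF C with hD
  set a : ℤ := min p.2 q.2 with ha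
  have hadj2 : ∀ x y : V, adjV x y → ((x.2 : ℤ) - y.2).natAbs ≤ 1 := by
    intro x y h; simp only [adjV] at h; omega
  have hcols : ∀ k : ℤ, a ≤ k → k ≤ a + D → ∃ z ∈ C, z.2 = k := by
    intro k hk1 hk2
    rcases le_total q.2 p.2 with h | h
    · exact ival C Prod.snd hadj2 hq (hconn q hq p hp) (by omega) (by omega)
    · exact ival C Prod.snd hadj2 hp (hconn p hp q hq) (by omega) (by omega)
  set g : ℤ → ℤ := fun k =>
    if h : ((C.filter (fun z => z.2 = k)).image Prod.fst).Nonempty then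
      Finset.max' _ h else 0 with hg
  have hgood : ∀ k : ℤ, a ≤ k → k ≤ a + D →
      ((g k, k) : V) ∈ C ∧ ∀ x : ℤ, g k < x → ((x, k) : V) ∉ C := by
    intro k hk1 hk2
    obtain ⟨z, hz, hz1⟩ := hcols k hk1 hk2
    have hne' : ((C.filter (fun w => w.2 = k)).image Prod.fst).Nonempty :=
      ⟨z.1, Finset.mem_image.2 ⟨z, Finset.mem_filter.2 ⟨hz, hz1⟩, rfl⟩⟩
    have hgk : g k = Finset.max' _ hne' := by rw [hg]; simp [hne']
    constructor
    · have := Finset.max'_mem _ hne'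
      rw [← hgk] at this
      obtain ⟨w, hw, hw2⟩ := Finset.mem_image.1 this
      obtain ⟨hwC, hwk⟩ := Finset.mem_filter.1 hw
      have : w = ((g k, k) : V) := by
        obtain ⟨w1, w2⟩ := w; simp_all
      rwa [← this]
    · intro x hx hmem
      have : x ∈ (C.filter (fun w => w.2 = k)).image Prod.fst :=
        Finset.mem_image.2 ⟨(x, k), Finset.mem_filter.2 ⟨hmem, rfl⟩, rfl⟩
      have := Finset.le_max' _ x this
      rw [← hgk] at this
      omega
  set e : ℤ → Sym2 V := fun k => s(((g k, k) : V), ((g k + 1, k) : V)) with he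
  have hedge : ∀ k : ℤ, a ≤ k → k ≤ a + D → e k ∈ extBdryE C := by
    intro k hk1 hk2
    obtain ⟨h1, h2⟩ := hgood k hk1 hk2
    refine ⟨(g k, k), (g k + 1, k), rfl, by simp only [adjV]; omega, h1, ?_⟩
    exact ray_right C (g k + 1) k (fun x hx => h2 x (by omega))
  have hinj : ∀ k₁ k₂ : ℤ, e k₁ = e k₂ → k₁ = k₂ := by
    intro k₁ k₂ h
    rw [he] at h
    simp only [Sym2.eq_iff, Prod.mk.injEq] at h
    omega
  have hsubset : ↑((Finset.Icc a (a + D)).image e) ⊆ extBdryE C := by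
    intro x hx
    simp only [Finset.coe_image, Set.mem_image, Finset.mem_coe, Finset.mem_Icc] at hx
    obtain ⟨k, ⟨hk1, hk2⟩, rfl⟩ := hx
    exact hedge k hk1 hk2
  have hcard : ((Finset.Icc a (a + D)).image e).card = D + 1 := by
    rw [Finset.card_image_of_injOn (fun x _ y _ h => hinj x y h), Int.card_Icc]
    omega
  calc D + 1 = (↑((Finset.Icc a (a + D)).image e) : Set (Sym2 V)).ncard := by
        rw [Set.ncard_coe_finset, hcard]
    _ ≤ (extBdryE C).ncard := Set.ncard_le_ncard hsubset (extBdryE_finite C)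

lemma diam_bound (C : Finset V) {x y : V} (hx : x ∈ C) (hy : y ∈ C) :
    (x.1 - y.1).natAbs ≤ diamF C ∧ (x.2 - y.2).natAbs ≤ diamF C := by
  have h : max (x.1 - y.1).natAbs (x.2 - y.2).natAbs ≤ diamF C := by
    rw [diamF]
    have h1 : max (x.1 - y.1).natAbs (x.2 - y.2).natAbs ≤
        C.sup fun z => max (x.1 - z.1).natAbs (x.2 - z.2).natAbs :=
      Finset.le_sup (f := fun z => max (x.1 - z.1).natAbs (x.2 - z.2).natAbs) hy
    have h2 : (C.sup fun z => max (x.1 - z.1).natAbs (x.2 - z.2).natAbs) ≤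
        C.sup fun w => C.sup fun z => max (w.1 - z.1).natAbs (w.2 - z.2).natAbs :=
      Finset.le_sup (f := fun w => C.sup fun z =>
        max (w.1 - z.1).natAbs (w.2 - z.2).natAbs) hx
    exact le_trans h1 h2
  omega


/-- For any finite nonempty connected `C ⊆ Λ(n)` not touching the boundary of the box,
the external edge boundary of `C` has cardinality at least `1 + diam C`, which is at
least `√|C|`. -/
theorem stmt0 (n : ℕ) (C : Finset V) (hne : C.Nonempty) (hconn : FinConnected C)
    (hsub : C ⊆ Lam n) (hbd : ∀ x ∈ C, x ∉ bdry n) :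
    Real.sqrt C.card ≤ 1 + diamF C ∧
      ((1 + diamF C : ℝ) ≤ (extBdryE C).ncard) := by
  set D := diamF C with hD
  constructor
  · -- sqrt |C| ≤ 1 + D
    have hane : (C.image Prod.fst).Nonempty := hne.image _
    have hbne : (C.image Prod.snd).Nonempty := hne.image _
    set a := (C.image Prod.fst).min' hane with ha
    set b := (C.image Prod.snd).min' hbne with hb
    obtain ⟨pa, hpa, hpa1⟩ := Finset.mem_image.1 ((C.image Prod.fst).min'_mem hane)
    obtain ⟨pb, hpb, hpb1⟩ := Finset.mem_image.1 ((C.image Prod.snd).min'_mem hbne)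
    have hsub2 : C ⊆ Finset.Icc a (a + D) ×ˢ Finset.Icc b (b + D) := by
      intro x hx
      have h1 : a ≤ x.1 := Finset.min'_le _ _ (Finset.mem_image_of_mem _ hx)
      have h2 : b ≤ x.2 := Finset.min'_le _ _ (Finset.mem_image_of_mem _ hx)
      have h3 := (diam_bound C hx hpa).1
      have h4 := (diam_bound C hx hpb).2
      simp only [Finset.mem_product, Finset.mem_Icc]
      omega
    have hcard : C.card ≤ (D + 1) ^ 2 := by
      calc C.card ≤ (Finset.Icc a (a + D) ×ˢ Finset.Icc b (b + D)).card :=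
            Finset.card_le_card hsub2
        _ = (D + 1) ^ 2 := by
            rw [Finset.card_product, Int.card_Icc, Int.card_Icc]
            have : ((a + D + 1 - a).toNat) = D + 1 := by omega
            have h2 : ((b + D + 1 - b).toNat) = D + 1 := by omega
            rw [this, h2]; ring
    have : Real.sqrt C.card ≤ Real.sqrt (((D : ℝ) + 1) ^ 2) := by
      apply Real.sqrt_le_sqrt
      have := (Nat.cast_le (α := ℝ)).2 hcard
      push_cast at this ⊢
      linarith
    rwa [Real.sqrt_sq (by positivity), add_comm] at this
  · -- boundary bound
    obtain ⟨p, hp, hp1⟩ := Finset.exists_mem_eq_sup C hne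
      (fun x => C.sup fun y => max (x.1 - y.1).natAbs (x.2 - y.2).natAbs)
    obtain ⟨q, hq, hq1⟩ := Finset.exists_mem_eq_sup C hne
      (fun y => max (p.1 - y.1).natAbs (p.2 - y.2).natAbs)
    have hDm : D = max (p.1 - q.1).natAbs (p.2 - q.2).natAbs := by
      rw [hD, diamF, hp1, hq1]
    have hkey : D + 1 ≤ (extBdryE C).ncard := by
      rcases max_cases (p.1 - q.1).natAbs (p.2 - q.2).natAbs with ⟨h1, _⟩ | ⟨h1, _⟩
      · exact key1 C hconn p q hp hq (by omega)
      · exact key2 C hconn p q hp hq (by omega)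
    have := (Nat.cast_le (α := ℝ)).2 hkey
    push_cast at this
    linarith
end
end

section
/- Let N ≥ 1 and let ε_1,...,ε_M be i.i.d. uniform random signs in {-1,+1} attached to clusters, with weights a_1,...,a_M each satisfying 1 ≤ a_i ≤ N. Suppose the weighted sum S = Σ a_i ε_i is considered, and sort indices by weight. Then for each j, conditionally on the partial sum over weights ≤ j-1 lying in [-N, N], the probability that the partial sum over weights ≤ j lies in [-N, N] is at least K_2/(2n), provided the number of weight-j indices is at most 2n, where K_2 is a constant with C(2k,k)/4^k ≥ K_2/sqrt(2k) for all k ≥ 1. Consequently P(|S| ≤ N) ≥ (K_2/(2n))^N. -/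
open scoped Classical BigOperators

noncomputable section

/-- The partial weighted sum of signs over the indices whose weight is at most `j`. -/
def Spart (M : ℕ) (a : Fin M → ℕ) (j : ℕ) (ε : Fin M → Bool) : ℤ :=
  ∑ i ∈ Finset.univ.filter (fun i => a i ≤ j), (a i : ℤ) * (if ε i then 1 else -1)

lemma card_bool_fun_eq_choose (ι : Type*) [Fintype ι] [DecidableEq ι] (t : ℕ) :
    (Finset.univ.filter fun f : ι → Bool => (Finset.univ.filter fun i => f i = true).card = t).card
      = (Fintype.card ι).choose t := by
  rw [← Finset.card_univ (α := ι), ← Finset.card_powersetCard t (Finset.univ : Finset ι)]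
  apply Finset.card_bij' (fun f _ => Finset.univ.filter fun i => f i = true)
    (fun S _ => fun i => decide (i ∈ S))
  case hi =>
    intro f hf
    simp only [Finset.mem_filter, Finset.mem_univ, true_and] at hf
    simp [Finset.mem_powersetCard, hf]
  case hj =>
    intro S hS
    simp only [Finset.mem_powersetCard] at hS
    simp only [Finset.mem_filter, Finset.mem_univ, true_and]
    rw [← hS.2]
    congr 1
    ext i; simp
  case left_inv =>
    intro f hf
    funext i; simp
  case right_inv =>
    intro S hS
    ext i; simp

lemma sum_sign_eq {ι : Type*} [Fintype ι] (f : ι → Bool) :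
    ∑ i, (if f i then (1:ℤ) else -1)
      = 2 * ((Finset.univ.filter fun i => f i = true).card : ℤ) - Fintype.card ι := by
  have h : ∀ i, (if f i then (1:ℤ) else -1) = 2 * (if f i = true then (1:ℤ) else 0) - 1 := by
    intro i; by_cases h : f i <;> simp [h]
  rw [Finset.sum_congr rfl (fun i _ => h i), Finset.sum_sub_distrib, ← Finset.mul_sum]
  simp [Finset.sum_boole, Finset.card_univ]

lemma choose_half_pascal (k : ℕ) (hk : 1 ≤ k) :
    (2 * k).choose k = 2 * ((2 * k - 1).choose k) := by
  obtain ⟨m, rfl⟩ : ∃ m, k = m + 1 := ⟨k - 1, by omega⟩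
  have h1 : 2 * (m + 1) = (2 * m + 1) + 1 := by ring
  have h2 : 2 * (m + 1) - 1 = 2 * m + 1 := by omega
  rw [h1]
  have h2' : 2 * m + 1 + 1 - 1 = 2 * m + 1 := by omega
  rw [h2', Nat.choose_succ_succ]
  have hsymm : (2 * m + 1).choose (m + 1) = (2 * m + 1).choose m := by
    have := Nat.choose_symm (n := 2 * m + 1) (k := m) (by omega)
    have h3 : 2 * m + 1 - m = m + 1 := by omega
    rw [h3] at this
    exact this
  simp only [Nat.succ_eq_add_one, hsymm]
  ring

lemma real_bound (n k : ℕ) (hk : 1 ≤ k) (h2 : 2 * k ≤ 2 * n)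
    (K₂ : ℝ) (hK₂0 : 0 < K₂)
    (hKbin : ∀ k : ℕ, 1 ≤ k →
      K₂ / Real.sqrt (2 * k) ≤ (Nat.choose (2 * k) k : ℝ) / 4 ^ k) :
    K₂ / (2 * n) * 4 ^ k ≤ ((2 * k).choose k : ℝ) := by
  have hn1 : 1 ≤ n := by omega
  have hsq : Real.sqrt (2 * k) ≤ 2 * n := by
    have h4 : (2 * k : ℝ) ≤ (2 * n) ^ 2 := by
      have : (2 * k : ℝ) ≤ 2 * n := by exact_mod_cast h2
      nlinarith [this, (by exact_mod_cast hn1 : (1:ℝ) ≤ n)]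
    calc Real.sqrt (2 * k) ≤ Real.sqrt ((2 * n)^2) := Real.sqrt_le_sqrt h4
      _ = 2 * n := Real.sqrt_sq (by positivity)
  have hsqpos : 0 < Real.sqrt (2 * k) := Real.sqrt_pos.mpr (by positivity)
  have h5 : K₂ / (2 * n) ≤ K₂ / Real.sqrt (2 * k) :=
    div_le_div_of_nonneg_left hK₂0.le (by positivity) hsq
  have h6 := hKbin k hk
  have h7 : K₂ / Real.sqrt (2 * k) * 4 ^ k ≤ ((2 * k).choose k : ℝ) := by
    rw [div_mul_eq_mul_div] at *
    calc K₂ * 4 ^ k / Real.sqrt (2 * k) ≤ ((2*k).choose k : ℝ) / 4 ^ k * 4 ^ k := by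
          rw [div_le_iff₀ (by positivity)] at h6 ⊢
          calc K₂ * 4 ^ k ≤ ((2*k).choose k : ℝ) / 4 ^ k * 4 ^ k * Real.sqrt (2*k) := by
                have := mul_le_mul_of_nonneg_right h6 (by positivity : (0:ℝ) ≤ 4 ^ k)
                nlinarith [this, hsqpos]
            _ = _ := rfl
      _ = ((2*k).choose k : ℝ) := by field_simp
  calc K₂ / (2 * n) * 4 ^ k ≤ K₂ / Real.sqrt (2 * k) * 4 ^ k := by
        apply mul_le_mul_of_nonneg_right h5 (by positivity)
    _ ≤ _ := h7

lemma core (ι : Type*) [Fintype ι] [DecidableEq ι] (n N j : ℕ) (hn : 1 ≤ n)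
    (hj : 1 ≤ j) (hjN : j ≤ N) (hm : Fintype.card ι ≤ 2 * n) (s : ℤ) (hs : |s| ≤ N)
    (K₂ : ℝ) (hK₂0 : 0 < K₂) (hK₂1 : K₂ < 1)
    (hKbin : ∀ k : ℕ, 1 ≤ k →
      K₂ / Real.sqrt (2 * k) ≤ (Nat.choose (2 * k) k : ℝ) / 4 ^ k) :
    K₂ / (2 * n) * 2 ^ (Fintype.card ι)
      ≤ ((Finset.univ.filter fun f : ι → Bool =>
          |s + (j : ℤ) * ∑ i, (if f i then (1:ℤ) else -1)| ≤ (N : ℤ)).card : ℝ) := by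
  classical
  set m := Fintype.card ι with hmdef
  have hc1 : K₂ / (2 * n) ≤ 1 := by
    rw [div_le_one (by positivity)]
    calc K₂ ≤ 1 := hK₂1.le
      _ ≤ 2 * n := by exact_mod_cast Nat.one_le_iff_ne_zero.mpr (by omega)
  rcases Nat.eq_zero_or_pos m with hm0 | hm1
  · have huniv : (Finset.univ.filter fun f : ι → Bool =>
        |s + (j : ℤ) * ∑ i, (if f i then (1:ℤ) else -1)| ≤ (N : ℤ)) = Finset.univ := by
      apply Finset.filter_true_of_mem
      intro f _
      have hempty : (Finset.univ : Finset ι) = ∅ := by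
        rw [← Finset.card_eq_zero, Finset.card_univ, ← hmdef, hm0]
      rw [hempty]
      simpa using hs
    rw [huniv, Finset.card_univ, Fintype.card_fun, Fintype.card_bool, ← hmdef, hm0]
    simpa using hc1
  · obtain ⟨t, kk, htm, hkk1, hkk2, hk, hkN⟩ : ∃ (t : ℕ) (kk : ℤ), t ≤ m ∧
        -1 ≤ kk ∧ kk ≤ 1 ∧ 2 * (t:ℤ) - m = kk ∧
        |s + (j:ℤ) * kk| ≤ (N:ℤ) := by
      rcases Nat.even_or_odd m with he | ho
      · exact ⟨m / 2, 0, by omega, by omega, by omega,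
          by rcases he with ⟨r, hr⟩; omega, by simpa using hs⟩
      · rcases le_or_gt s 0 with hs0 | hs0
        · refine ⟨(m + 1) / 2, 1, by omega, by omega, by omega,
            by rcases ho with ⟨r, hr⟩; omega, ?_⟩
          rw [abs_le] at hs ⊢
          have hjN' : (j:ℤ) ≤ N := by exact_mod_cast hjN
          have hj1 : (1:ℤ) ≤ j := by exact_mod_cast hj
          constructor <;> omega
        · refine ⟨(m - 1) / 2, -1, by omega, by omega, by omega,
            by rcases ho with ⟨r, hr⟩; omega, ?_⟩
          rw [abs_le] at hs ⊢
          have hjN' : (j:ℤ) ≤ N := by exact_mod_cast hjN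
          have hj1 : (1:ℤ) ≤ j := by exact_mod_cast hj
          constructor <;> omega
    have hsub : (Finset.univ.filter fun f : ι → Bool =>
          (Finset.univ.filter fun i => f i = true).card = t)
        ⊆ (Finset.univ.filter fun f : ι → Bool =>
          |s + (j : ℤ) * ∑ i, (if f i then (1:ℤ) else -1)| ≤ (N : ℤ)) := by
      intro f hf
      simp only [Finset.mem_filter, Finset.mem_univ, true_and] at hf ⊢
      rw [sum_sign_eq, hf, ← hmdef, hk]
      exact hkN
    have hcard : ((m.choose t : ℕ) : ℝ) ≤ ((Finset.univ.filter fun f : ι → Bool =>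
          |s + (j : ℤ) * ∑ i, (if f i then (1:ℤ) else -1)| ≤ (N : ℤ)).card : ℝ) := by
      exact_mod_cast (card_bool_fun_eq_choose ι t ▸ Finset.card_le_card hsub)
    refine le_trans ?_ hcard
    set k' := (m + 1) / 2 with hk'
    have hk'1 : 1 ≤ k' := by omega
    have h2k' : 2 * k' ≤ 2 * n := by
      rcases Nat.even_or_odd m with he | ho
      · rcases he with ⟨r, hr⟩; omega
      · rcases ho with ⟨r, hr⟩; omega
    have hrb := real_bound n k' hk'1 h2k' K₂ hK₂0 hKbin
    rcases Nat.even_or_odd m with he | ho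
    · have hme : m = 2 * k' := by rcases he with ⟨r, hr⟩; omega
      have hte : t = k' := by rcases he with ⟨r, hr⟩; omega
      rw [hme, hte]
      calc K₂ / (2 * n) * 2 ^ (2 * k') = K₂ / (2 * n) * 4 ^ k' := by
            rw [pow_mul]; norm_num
        _ ≤ _ := hrb
    · have hmo : m = 2 * k' - 1 ∧ 1 ≤ 2 * k' := by rcases ho with ⟨r, hr⟩; omega
      have hto : t = k' ∨ t = k' - 1 := by rcases ho with ⟨r, hr⟩; omega
      have hch : 2 * (m.choose t) = (2 * k').choose k' := by
        rw [choose_half_pascal k' hk'1]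
        have hmm : m = 2 * k' - 1 := hmo.1
        rcases hto with h | h
        · rw [hmm, h]
        · rw [hmm, h]
          congr 1
          have := Nat.choose_symm (n := 2 * k' - 1) (k := k' - 1) (by omega)
          have h3 : 2 * k' - 1 - (k' - 1) = k' := by omega
          rw [h3] at this
          exact this.symm
      have h2m : (2:ℝ) ^ m = 4 ^ k' / 2 := by
        have : (4:ℝ) ^ k' = 2 ^ (2 * k') := by rw [pow_mul]; norm_num
        rw [this]
        have h4 : 2 * k' = m + 1 := by omega
        rw [h4, pow_succ]
        ring
      have hfin : K₂ / (2 * n) * 2 ^ m ≤ ((2 * k').choose k' : ℝ) / 2 := by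
        rw [h2m]
        calc K₂ / (2 * n) * (4 ^ k' / 2) = (K₂ / (2 * n) * 4 ^ k') / 2 := by ring
          _ ≤ _ := by linarith [hrb]
      calc K₂ / (2 * n) * 2 ^ m ≤ ((2 * k').choose k' : ℝ) / 2 := hfin
        _ = ((2 * (m.choose t) : ℕ) : ℝ) / 2 := by rw [hch]
        _ = ((m.choose t : ℕ) : ℝ) := by push_cast; ring

lemma card_filter_equiv {α β : Type*} [Fintype α] [Fintype β] (e : α ≃ β)
    (P : α → Prop) [DecidablePred P] [DecidablePred fun b => P (e.symm b)] :
    (Finset.univ.filter P).card = (Finset.univ.filter fun b => P (e.symm b)).card := by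
  classical
  apply Finset.card_bij' (fun x _ => e x) (fun y _ => e.symm y) <;> simp

lemma prod_count1 {F₁ F₂ : Type*} [Fintype F₁] [Fintype F₂] (Q : F₂ → Prop)
    [DecidablePred Q] [DecidablePred fun x : F₁ × F₂ => Q x.2] :
    (Finset.univ.filter fun x : F₁ × F₂ => Q x.2).card
      = Fintype.card F₁ * (Finset.univ.filter Q).card := by
  classical
  rw [show (Finset.univ : Finset (F₁ × F₂)) = Finset.univ ×ˢ Finset.univ from
    Finset.univ_product_univ.symm]
  have h : (Finset.univ ×ˢ Finset.univ).filter (fun x : F₁ × F₂ => Q x.2)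
      = Finset.univ ×ˢ Finset.univ.filter Q := by
    ext x
    simp only [Finset.mem_filter, Finset.mem_product, Finset.mem_univ, true_and]
  rw [h, Finset.card_product, Finset.card_univ]

lemma prod_count2 {F₁ F₂ : Type*} [Fintype F₁] [Fintype F₂] (Q : F₂ → Prop)
    (P : F₁ × F₂ → Prop) [DecidablePred Q] [DecidablePred P]
    [DecidablePred fun x : F₁ × F₂ => P x ∧ Q x.2]
    [∀ g : F₂, DecidablePred fun f : F₁ => P (f, g)] :
    (Finset.univ.filter fun x : F₁ × F₂ => P x ∧ Q x.2).card
      = ∑ g ∈ Finset.univ.filter Q, (Finset.univ.filter fun f : F₁ => P (f, g)).card := by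
  classical
  rw [Finset.card_filter]
  rw [show (Finset.univ : Finset (F₁ × F₂)) = Finset.univ ×ˢ Finset.univ from
    Finset.univ_product_univ.symm]
  rw [Finset.sum_product_right]
  simp only [Finset.card_filter]
  rw [Finset.sum_filter]
  apply Finset.sum_congr rfl
  intro g _
  by_cases hq : Q g
  · simp [hq]
  · simp [hq]

/-- Weighted sums of i.i.d. uniform signs with integer weights `1 ≤ a_i ≤ N`, at most `2n`
indices of each weight.  Conditionally on the partial sum over weights `≤ j-1` lying in
`[-N, N]`, the partial sum over weights `≤ j` lies in `[-N, N]` with probability at least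
`K₂/(2n)` (stated multiplicatively via counts of sign configurations); consequently
`P(|S| ≤ N) ≥ (K₂/(2n))^N`. -/
theorem stmt2 (n N M : ℕ) (hn : 1 ≤ n) (hN : 1 ≤ N)
    (a : Fin M → ℕ) (ha : ∀ i, 1 ≤ a i ∧ a i ≤ N)
    (hcount : ∀ j : ℕ, (Finset.univ.filter fun i => a i = j).card ≤ 2 * n)
    (K₂ : ℝ) (hK₂0 : 0 < K₂) (hK₂1 : K₂ < 1)
    (hKbin : ∀ k : ℕ, 1 ≤ k →
      K₂ / Real.sqrt (2 * k) ≤ (Nat.choose (2 * k) k : ℝ) / 4 ^ k) :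
    (∀ j : ℕ, 1 ≤ j → j ≤ N →
      (K₂ / (2 * n)) *
          ((Finset.univ.filter fun ε : Fin M → Bool =>
              |Spart M a (j - 1) ε| ≤ (N : ℤ)).card : ℝ)
        ≤ ((Finset.univ.filter fun ε : Fin M → Bool =>
              |Spart M a j ε| ≤ (N : ℤ) ∧ |Spart M a (j - 1) ε| ≤ (N : ℤ)).card : ℝ)) ∧
    (K₂ / (2 * n)) ^ N * 2 ^ M ≤
      ((Finset.univ.filter fun ε : Fin M → Bool =>
          |Spart M a N ε| ≤ (N : ℤ)).card : ℝ) := by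
  classical
  have hn2 : (0:ℝ) < 2 * n := by
    have : (1:ℝ) ≤ n := by exact_mod_cast hn
    linarith
  have hcnn : 0 ≤ K₂ / (2 * (n:ℝ)) := div_nonneg hK₂0.le hn2.le
  have part1 : ∀ j : ℕ, 1 ≤ j → j ≤ N →
      (K₂ / (2 * n)) *
          ((Finset.univ.filter fun ε : Fin M → Bool =>
              |Spart M a (j - 1) ε| ≤ (N : ℤ)).card : ℝ)
        ≤ ((Finset.univ.filter fun ε : Fin M → Bool =>
              |Spart M a j ε| ≤ (N : ℤ) ∧ |Spart M a (j - 1) ε| ≤ (N : ℤ)).card : ℝ) := by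
    intro j hj1 hjN
    set p : Fin M → Prop := fun i => a i = j with hpdef
    set e := Equiv.piEquivPiSubtypeProd p (fun _ => Bool) with hedef
    set m := Fintype.card {x // p x} with hmdef
    have hmle : m ≤ 2 * n := by rw [hmdef, Fintype.card_subtype]; exact hcount j
    have hdec : ∀ ε : Fin M → Bool, Spart M a j ε = Spart M a (j - 1) ε
        + (j:ℤ) * ∑ i ∈ Finset.univ.filter p, (if ε i then (1:ℤ) else -1) := by
      intro ε
      unfold Spart
      have hsplit : (Finset.univ.filter fun i : Fin M => a i ≤ j)
          = (Finset.univ.filter fun i : Fin M => a i ≤ j - 1) ∪ (Finset.univ.filter p) := by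
        ext i
        simp only [Finset.mem_filter, Finset.mem_union, Finset.mem_univ, true_and, hpdef]
        omega
      have hdisj : Disjoint (Finset.univ.filter fun i : Fin M => a i ≤ j - 1)
          (Finset.univ.filter p) := by
        rw [Finset.disjoint_left]
        intro i hi hip
        simp only [Finset.mem_filter, Finset.mem_univ, true_and, hpdef] at hi hip
        omega
      rw [hsplit, Finset.sum_union hdisj]
      congr 1
      rw [Finset.mul_sum]
      apply Finset.sum_congr rfl
      intro i hi
      simp only [Finset.mem_filter, Finset.mem_univ, true_and, hpdef] at hi
      rw [hi]
    have hinv : ∀ (f : ∀ i : {x // p x}, Bool) (g : ∀ i : {x // ¬ p x}, Bool),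
        Spart M a (j - 1) (e.symm (f, g)) = Spart M a (j - 1) (e.symm (fun _ => true, g)) := by
      intro f g
      unfold Spart
      apply Finset.sum_congr rfl
      intro i hi
      simp only [Finset.mem_filter, Finset.mem_univ, true_and] at hi
      have hnp : ¬ p i := by simp only [hpdef]; omega
      simp only [hedef, Equiv.piEquivPiSubtypeProd_symm_apply, dif_neg hnp]
    have hB : ∀ (f : ∀ i : {x // p x}, Bool) (g : ∀ i : {x // ¬ p x}, Bool),
        ∑ i ∈ Finset.univ.filter p, (if (e.symm (f, g)) i then (1:ℤ) else -1)
          = ∑ x : {i // p i}, (if f x then (1:ℤ) else -1) := by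
      intro f g
      rw [Finset.sum_subtype (p := p) (Finset.univ.filter p) (fun x => by simp)
        (fun i => if (e.symm (f, g)) i then (1:ℤ) else -1)]
      apply Finset.sum_congr rfl
      intro x _
      have hx : (e.symm (f, g)) x.1 = f x := by
        simp only [hedef, Equiv.piEquivPiSubtypeProd_symm_apply, dif_pos x.2]
      rw [hx]
    set Sg : (∀ i : {x // ¬ p x}, Bool) → ℤ :=
      fun g => Spart M a (j - 1) (e.symm (fun _ => true, g)) with hSgdef
    set T : (∀ i : {x // p x}, Bool) → ℤ :=
      fun f => ∑ x : {i // p i}, (if f x then (1:ℤ) else -1) with hTdef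
    have hx2 : ∀ x : (∀ i : {x // p x}, Bool) × (∀ i : {x // ¬ p x}, Bool),
        Spart M a (j - 1) (e.symm x) = Sg x.2 := by
      rintro ⟨f, g⟩; exact hinv f g
    have hx1 : ∀ x : (∀ i : {x // p x}, Bool) × (∀ i : {x // ¬ p x}, Bool),
        Spart M a j (e.symm x) = Sg x.2 + (j:ℤ) * T x.1 := by
      rintro ⟨f, g⟩
      rw [hdec, hB, hx2 ⟨f, g⟩]
    have hQc : (Finset.univ.filter fun ε : Fin M → Bool =>
        |Spart M a (j - 1) ε| ≤ (N:ℤ)).card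
        = 2 ^ m * (Finset.univ.filter fun g => |Sg g| ≤ (N:ℤ)).card := by
      rw [card_filter_equiv e (fun ε => |Spart M a (j - 1) ε| ≤ (N:ℤ))]
      have h1 : (Finset.univ.filter fun x => |Spart M a (j - 1) (e.symm x)| ≤ (N:ℤ))
          = Finset.univ.filter (fun x : (∀ i : {x // p x}, Bool) × (∀ i : {x // ¬ p x}, Bool)
            => |Sg x.2| ≤ (N:ℤ)) := by
        apply Finset.filter_congr
        intro x _
        rw [hx2 x]
      rw [h1, prod_count1 (fun g => |Sg g| ≤ (N:ℤ)), Fintype.card_fun, Fintype.card_bool, ← hmdef]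
    have hPQc : (Finset.univ.filter fun ε : Fin M → Bool =>
        |Spart M a j ε| ≤ (N:ℤ) ∧ |Spart M a (j - 1) ε| ≤ (N:ℤ)).card
        = ∑ g ∈ Finset.univ.filter (fun g => |Sg g| ≤ (N:ℤ)),
            (Finset.univ.filter fun f => |Sg g + (j:ℤ) * T f| ≤ (N:ℤ)).card := by
      rw [card_filter_equiv e (fun ε => |Spart M a j ε| ≤ (N:ℤ)
        ∧ |Spart M a (j - 1) ε| ≤ (N:ℤ))]
      have h1 : (Finset.univ.filter fun x => |Spart M a j (e.symm x)| ≤ (N:ℤ)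
          ∧ |Spart M a (j - 1) (e.symm x)| ≤ (N:ℤ))
          = Finset.univ.filter (fun x : (∀ i : {x // p x}, Bool) × (∀ i : {x // ¬ p x}, Bool)
            => |Sg x.2 + (j:ℤ) * T x.1| ≤ (N:ℤ) ∧ |Sg x.2| ≤ (N:ℤ)) := by
        apply Finset.filter_congr
        intro x _
        rw [hx1 x, hx2 x]
      rw [h1, prod_count2 (fun g => |Sg g| ≤ (N:ℤ))
        (fun x => |Sg x.2 + (j:ℤ) * T x.1| ≤ (N:ℤ))]
    rw [hQc, hPQc]
    have hcore : ∀ g ∈ Finset.univ.filter (fun g => |Sg g| ≤ (N:ℤ)),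
        K₂ / (2 * n) * 2 ^ m
          ≤ ((Finset.univ.filter fun f => |Sg g + (j:ℤ) * T f| ≤ (N:ℤ)).card : ℝ) := by
      intro g hg
      simp only [Finset.mem_filter, Finset.mem_univ, true_and] at hg
      have hcr := core {x // p x} n N j hn hj1 hjN (by rw [← hmdef]; exact hmle)
        (Sg g) hg K₂ hK₂0 hK₂1 hKbin
      rw [← hmdef] at hcr
      simpa only [hTdef] using hcr
    rw [Nat.cast_sum]
    calc K₂ / (2 * n) * ((2 ^ m * (Finset.univ.filter fun g => |Sg g| ≤ (N:ℤ)).card : ℕ) : ℝ)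
        = ∑ _g ∈ Finset.univ.filter (fun g => |Sg g| ≤ (N:ℤ)), (K₂ / (2 * n) * 2 ^ m) := by
          rw [Finset.sum_const, nsmul_eq_mul]
          push_cast
          ring
      _ ≤ ∑ g ∈ Finset.univ.filter (fun g => |Sg g| ≤ (N:ℤ)),
            ((Finset.univ.filter fun f => |Sg g + (j:ℤ) * T f| ≤ (N:ℤ)).card : ℝ) :=
          Finset.sum_le_sum hcore
  have base : ((Finset.univ.filter fun ε : Fin M → Bool =>
      |Spart M a 0 ε| ≤ (N : ℤ)).card : ℝ) = 2 ^ M := by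
    have hz : ∀ ε : Fin M → Bool, Spart M a 0 ε = 0 := by
      intro ε
      unfold Spart
      have hempty : (Finset.univ.filter fun i : Fin M => a i ≤ 0) = ∅ := by
        ext i
        simp only [Finset.mem_filter, Finset.mem_univ, true_and, Finset.notMem_empty,
          iff_false]
        have := (ha i).1
        omega
      rw [hempty, Finset.sum_empty]
    have huniv : (Finset.univ.filter fun ε : Fin M → Bool =>
        |Spart M a 0 ε| ≤ (N : ℤ)) = Finset.univ := by
      apply Finset.filter_true_of_mem
      intro ε _
      rw [hz ε]
      simp
    rw [huniv, Finset.card_univ, Fintype.card_fun, Fintype.card_bool, Fintype.card_fin]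
    push_cast
    ring
  refine ⟨part1, ?_⟩
  have ind : ∀ j : ℕ, j ≤ N → (K₂ / (2 * n)) ^ j * 2 ^ M ≤
      ((Finset.univ.filter fun ε : Fin M → Bool =>
          |Spart M a j ε| ≤ (N : ℤ)).card : ℝ) := by
    intro j
    induction j with
    | zero =>
      intro _
      rw [base, pow_zero, one_mul]
    | succ i ih =>
      intro hiN
      have h1 := part1 (i + 1) (by omega) hiN
      simp only [Nat.add_sub_cancel] at h1
      have h2 : ((Finset.univ.filter fun ε : Fin M → Bool =>
            |Spart M a (i + 1) ε| ≤ (N : ℤ) ∧ |Spart M a i ε| ≤ (N : ℤ)).card : ℝ)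
          ≤ ((Finset.univ.filter fun ε : Fin M → Bool =>
            |Spart M a (i + 1) ε| ≤ (N : ℤ)).card : ℝ) := by
        have := Finset.card_le_card (Finset.monotone_filter_right
          (Finset.univ : Finset (Fin M → Bool))
          (fun ε _ (h : |Spart M a (i + 1) ε| ≤ (N : ℤ) ∧ |Spart M a i ε| ≤ (N : ℤ)) => h.1))
        exact_mod_cast this
      calc (K₂ / (2 * n)) ^ (i + 1) * 2 ^ M
          = (K₂ / (2 * n)) * ((K₂ / (2 * n)) ^ i * 2 ^ M) := by ring
        _ ≤ (K₂ / (2 * n)) * ((Finset.univ.filter fun ε : Fin M → Bool =>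
              |Spart M a i ε| ≤ (N : ℤ)).card : ℝ) :=
            mul_le_mul_of_nonneg_left (ih (by omega)) hcnn
        _ ≤ _ := h1
        _ ≤ _ := h2
  exact ind N le_rfl

end
end

section
/- (Cost of closing edges in the random-cluster model.) Let n ≥ 1, p ∈ (0,1), q ≥ 1, and let A be a set of configurations on E_n. Let H assign to each ω ∈ A a set of edges H(ω) ⊂ E_n with |H(ω)| ≤ N for all ω ∈ A, and let ψ(ω) = ω_{H(ω)}. Then φ^1_{n,p,q}(ψ(A)) ≥ φ^1_{n,p,q}(A) · [ (min(p, 1-p)) / (3 p |Λ(n)|) ]^N. -/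
open scoped Classical BigOperators
open Finset

noncomputable section

/-- Edges with both endpoints in a given vertex set. -/
def EdgesOf (S : Finset V) : Finset (Sym2 V) :=
  ((S ×ˢ S).filter fun p => adjV p.1 p.2).image fun p => s(p.1, p.2)

/-- The edge set `E_n` of the box `Λ(n)`. -/
def En (n : ℕ) : Finset (Sym2 V) := EdgesOf (Lam n)

/-- A percolation configuration: each edge is open (`true`) or closed (`false`). -/
abbrev Cfg := Sym2 V → Bool

/-- Open connectivity inside the box `Λ(n)`. -/
def openConn (n : ℕ) (ω : Cfg) (x y : V) : Prop :=
  Relation.ReflTransGen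
    (fun a b => adjV a b ∧ a ∈ Lam n ∧ b ∈ Lam n ∧ ω s(a, b) = true) x y

/-- The open cluster of a vertex `x` in the box `Λ(n)`. -/
def cluster (n : ℕ) (ω : Cfg) (x : V) : Finset V :=
  (Lam n).filter fun y => openConn n ω x y

/-- `M_n(ω)`: vertices connected to the boundary of the box by an open path. -/
def Mn (n : ℕ) (ω : Cfg) : Finset V :=
  (Lam n).filter fun x => ∃ y ∈ bdry n, openConn n ω x y

/-- The set of open clusters of the configuration. -/
def clusters (n : ℕ) (ω : Cfg) : Finset (Finset V) := (Lam n).image (cluster n ω)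

/-- The set of open clusters not touching the boundary of the box. -/
def clustersMinus (n : ℕ) (ω : Cfg) : Finset (Finset V) :=
  ((Lam n).filter fun x => x ∉ Mn n ω).image (cluster n ω)

/-- Number of clusters with free boundary counting. -/
def k0 (n : ℕ) (ω : Cfg) : ℕ := (clusters n ω).card

/-- Number of clusters with wired boundary counting. -/
def k1 (n : ℕ) (ω : Cfg) : ℕ := (clustersMinus n ω).card + 1

/-- The (finite) set of configurations supported on the edges of the box. -/
def CfgSet (n : ℕ) : Finset Cfg :=
  (Finset.univ : Finset ({e // e ∈ En n} → Bool)).image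
    (fun f e => if h : e ∈ En n then f ⟨e, h⟩ else false)

/-- Cluster counting for boundary condition `ξ` (`true` = wired, `false` = free). -/
def kBC (ξ : Bool) (n : ℕ) (ω : Cfg) : ℕ := if ξ then k1 n ω else k0 n ω

/-- Random-cluster weight of a configuration. -/
def rcWeight (n : ℕ) (p q : ℝ) (ξ : Bool) (ω : Cfg) : ℝ :=
  q ^ (kBC ξ n ω) * ∏ e ∈ En n, (if ω e then p else 1 - p)

/-- The random-cluster probability `φ^ξ_{n,p,q}(A)` of an event `A`. -/
def rcProb (n : ℕ) (p q : ℝ) (ξ : Bool) (A : Set Cfg) : ℝ :=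
  (∑ ω ∈ (CfgSet n).filter (· ∈ A), rcWeight n p q ξ ω) /
    (∑ ω ∈ CfgSet n, rcWeight n p q ξ ω)

/-- The configuration obtained from `ω` by closing all the edges of `H`. -/
def closeE (ω : Cfg) (H : Finset (Sym2 V)) : Cfg := fun e => if e ∈ H then false else ω e

/-! ### Auxiliary lemmas -/

lemma adjV_symm' {x y : V} (h : adjV x y) : adjV y x := by
  unfold adjV at *; omega

lemma openConn_mono {n : ℕ} {ω ω' : Cfg} (h : ∀ e, ω e = true → ω' e = true)
    {x y : V} (hc : openConn n ω x y) : openConn n ω' x y :=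
  Relation.ReflTransGen.mono (p := fun a b => adjV a b ∧ a ∈ Lam n ∧ b ∈ Lam n ∧ ω' s(a, b) = true)
    (fun a b hs => ⟨hs.1, hs.2.1, hs.2.2.1, h _ hs.2.2.2⟩) _ _ hc

lemma closeE_le (ω : Cfg) (Hs : Finset (Sym2 V)) :
    ∀ e, closeE ω Hs e = true → ω e = true := by
  intro e he
  unfold closeE at he
  split at he
  · exact absurd he (by simp)
  · exact he

lemma Mn_mono {n : ℕ} {ω ω' : Cfg} (h : ∀ e, ω e = true → ω' e = true) :
    Mn n ω ⊆ Mn n ω' := by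
  intro x hx
  rw [Mn, Finset.mem_filter] at *
  obtain ⟨hxL, y, hy, hconn⟩ := hx
  exact ⟨hxL, y, hy, openConn_mono h hconn⟩

/-- The map sending an `ω`-cluster to the corresponding `ω'`-cluster. -/
def clMap (n : ℕ) (ω' : Cfg) (C : Finset V) : Finset V :=
  (Lam n).filter fun y => ∃ z ∈ C, openConn n ω' z y

lemma clMap_cluster {n : ℕ} {ω ω' : Cfg} (h : ∀ e, ω e = true → ω' e = true)
    {x : V} (hx : x ∈ Lam n) :
    clMap n ω' (cluster n ω x) = cluster n ω' x := by
  ext y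
  simp only [clMap, cluster, Finset.mem_filter]
  constructor
  · rintro ⟨hyL, z, ⟨hzL, hxz⟩, hzy⟩
    exact ⟨hyL, (openConn_mono h hxz).trans hzy⟩
  · rintro ⟨hyL, hxy⟩
    exact ⟨hyL, x, ⟨hx, Relation.ReflTransGen.refl⟩, hxy⟩

lemma card_clustersMinus_le {n : ℕ} {ω ω' : Cfg} (h : ∀ e, ω e = true → ω' e = true) :
    (clustersMinus n ω').card ≤ (clustersMinus n ω).card := by
  apply Finset.card_le_card_of_surjOn (clMap n ω')
  intro C hC
  simp only [Finset.coe_image, clustersMinus, Set.mem_image, Finset.mem_coe,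
    Finset.mem_image, Finset.mem_filter] at hC ⊢
  obtain ⟨x, ⟨hxL, hxM⟩, rfl⟩ := hC
  refine ⟨cluster n ω x, ⟨x, ⟨hxL, fun hc => hxM (Mn_mono h hc)⟩, rfl⟩, ?_⟩
  exact clMap_cluster h hxL

lemma k1_le_closeE {n : ℕ} (ω : Cfg) (Hs : Finset (Sym2 V)) :
    k1 n ω ≤ k1 n (closeE ω Hs) := by
  unfold k1
  have := card_clustersMinus_le (n := n) (closeE_le ω Hs)
  omega

lemma mem_CfgSet_iff {n : ℕ} {ω : Cfg} :
    ω ∈ CfgSet n ↔ ∀ e, e ∉ En n → ω e = false := by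
  unfold CfgSet
  simp only [Finset.mem_image, Finset.mem_univ, true_and]
  constructor
  · rintro ⟨f, rfl⟩ e he
    simp [he]
  · intro h
    refine ⟨fun e => ω e.1, ?_⟩
    funext e
    by_cases he : e ∈ En n
    · simp [he]
    · simp [he, h e he]

lemma closeE_mem_CfgSet {n : ℕ} {ω : Cfg} (hω : ω ∈ CfgSet n) (Hs : Finset (Sym2 V)) :
    closeE ω Hs ∈ CfgSet n := by
  rw [mem_CfgSet_iff] at *
  intro e he
  unfold closeE
  split
  · rfl
  · exact hω e he

lemma cfgSet_nonempty (n : ℕ) : (CfgSet n).Nonempty :=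
  ⟨_, Finset.mem_image_of_mem _ (Finset.mem_univ (fun _ => false))⟩

lemma rcWeight_pos {n : ℕ} {p q : ℝ} (hp0 : 0 < p) (hp1 : p < 1) (hq : 1 ≤ q)
    (ξ : Bool) (ω : Cfg) : 0 < rcWeight n p q ξ ω := by
  unfold rcWeight
  apply mul_pos
  · exact pow_pos (lt_of_lt_of_le one_pos hq) _
  · apply Finset.prod_pos
    intro e _
    split
    · exact hp0
    · linarith

/-- Pointwise weight bound for closing edges. -/
lemma weight_closeE_ge {n : ℕ} {p q : ℝ} (hp0 : 0 < p) (hp1 : p < 1) (hq : 1 ≤ q)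
    {N : ℕ} {ω : Cfg} {Hs : Finset (Sym2 V)} (hsub : Hs ⊆ En n) (hcard : Hs.card ≤ N) :
    rcWeight n p q true ω * (min p (1 - p) / p) ^ N ≤ rcWeight n p q true (closeE ω Hs) := by
  have hmin : 0 < min p (1 - p) := lt_min hp0 (by linarith)
  have hc0 : 0 < min p (1 - p) / p := div_pos hmin hp0
  have hc1 : min p (1 - p) / p ≤ 1 := div_le_one_of_le₀ (min_le_left _ _) hp0.le
  unfold rcWeight kBC
  simp only [if_pos rfl]
  set f : Bool → ℝ := fun b => if b then p else 1 - p with hf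
  have hfpos : ∀ b, 0 < f b := by
    intro b; cases b <;> simp [hf] <;> linarith
  have hq0 : (0 : ℝ) < q := lt_of_lt_of_le one_pos hq
  -- split the products
  have hP : (∏ e ∈ En n, f (ω e))
      = (∏ e ∈ En n \ Hs, f (ω e)) * ∏ e ∈ Hs, f (ω e) :=
    (Finset.prod_sdiff hsub).symm
  have hP' : (∏ e ∈ En n, f (closeE ω Hs e))
      = (∏ e ∈ En n \ Hs, f (ω e)) * ∏ e ∈ Hs, (1 - p) := by
    rw [← Finset.prod_sdiff hsub]
    congr 1
    · apply Finset.prod_congr rfl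
      intro e he
      rw [Finset.mem_sdiff] at he
      unfold closeE
      rw [if_neg he.2]
    · apply Finset.prod_congr rfl
      intro e he
      unfold closeE
      rw [if_pos he]
      simp [hf]
  have hprod : (∏ e ∈ Hs, f (ω e)) * (min p (1 - p) / p) ^ N ≤ ∏ e ∈ Hs, (1 - p) := by
    calc (∏ e ∈ Hs, f (ω e)) * (min p (1 - p) / p) ^ N
        ≤ (∏ e ∈ Hs, f (ω e)) * (min p (1 - p) / p) ^ Hs.card := by
          apply mul_le_mul_of_nonneg_left (pow_le_pow_of_le_one hc0.le hc1 hcard)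
          exact (Finset.prod_pos (fun e _ => hfpos _)).le
      _ = ∏ e ∈ Hs, (f (ω e) * (min p (1 - p) / p)) := by
          rw [Finset.prod_mul_distrib, Finset.prod_const]
      _ ≤ ∏ e ∈ Hs, (1 - p) := by
          apply Finset.prod_le_prod
          · intro e _; exact (mul_pos (hfpos _) hc0).le
          · intro e _
            cases hb : ω e
            · have hfb : f false = 1 - p := by simp [hf]
              rw [hfb]
              nlinarith
            · have hfb : f true = p := by simp [hf]
              rw [hfb]
              have hpc : p * (min p (1 - p) / p) = min p (1 - p) := by
                field_simp
              rw [hpc]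
              exact min_le_right _ _
  calc q ^ k1 n ω * (∏ e ∈ En n, f (ω e)) * (min p (1 - p) / p) ^ N
      = q ^ k1 n ω * ((∏ e ∈ En n \ Hs, f (ω e)) *
          ((∏ e ∈ Hs, f (ω e)) * (min p (1 - p) / p) ^ N)) := by rw [hP]; ring
    _ ≤ q ^ k1 n (closeE ω Hs) * ((∏ e ∈ En n \ Hs, f (ω e)) * (∏ e ∈ Hs, (1 - p))) := by
        have h1 : q ^ k1 n ω ≤ q ^ k1 n (closeE ω Hs) :=
          pow_le_pow_right₀ hq (k1_le_closeE ω Hs)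
        have h2 : (∏ e ∈ En n \ Hs, f (ω e)) *
              ((∏ e ∈ Hs, f (ω e)) * (min p (1 - p) / p) ^ N)
            ≤ (∏ e ∈ En n \ Hs, f (ω e)) * (∏ e ∈ Hs, (1 - p)) :=
          mul_le_mul_of_nonneg_left hprod (Finset.prod_pos (fun e _ => hfpos _)).le
        refine mul_le_mul h1 h2 ?_ (pow_pos hq0 _).le
        exact mul_nonneg (Finset.prod_pos (fun e _ => hfpos _)).le
          (mul_nonneg (Finset.prod_pos (fun e _ => hfpos _)).le (pow_nonneg hc0.le _))
    _ = q ^ k1 n (closeE ω Hs) * ∏ e ∈ En n, f (closeE ω Hs e) := by rw [hP']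

lemma card_Lam (n : ℕ) : (Lam n).card = n ^ 2 := by
  unfold Lam
  rw [Finset.card_product, Int.card_Ico]
  have h1 : ((n : ℤ) - (n : ℤ) / 2 - -((n : ℤ) / 2)) = n := by ring
  rw [h1, Int.toNat_natCast, sq]

lemma card_En_le (n : ℕ) : (En n).card ≤ 2 * n ^ 2 := by
  classical
  have hsub : En n ⊆ (Lam n ×ˢ ({((1 : ℤ), (0 : ℤ)), ((0 : ℤ), (1 : ℤ))} : Finset V)).image
      (fun ad => s(ad.1, ad.1 + ad.2)) := by
    intro e he
    unfold En EdgesOf at he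
    rw [Finset.mem_image] at he
    obtain ⟨⟨a, b⟩, hab, rfl⟩ := he
    rw [Finset.mem_filter, Finset.mem_product] at hab
    obtain ⟨⟨ha, hb⟩, hadj⟩ := hab
    unfold adjV at hadj
    rw [Finset.mem_image]
    have hcases : (b.1 = a.1 + 1 ∧ b.2 = a.2) ∨ (a.1 = b.1 + 1 ∧ a.2 = b.2)
        ∨ (b.2 = a.2 + 1 ∧ b.1 = a.1) ∨ (a.2 = b.2 + 1 ∧ a.1 = b.1) := by
      simp only at hadj; omega
    rcases hcases with ⟨h1, h2⟩ | ⟨h1, h2⟩ | ⟨h1, h2⟩ | ⟨h1, h2⟩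
    · refine ⟨(a, (1, 0)), by simp [Finset.mem_product, ha], ?_⟩
      have hb' : a + ((1 : ℤ), (0 : ℤ)) = b := by
        ext <;> simp [Prod.fst_add, Prod.snd_add] <;> omega
      simp only [hb']
    · refine ⟨(b, (1, 0)), by simp [Finset.mem_product, hb], ?_⟩
      have hb' : b + ((1 : ℤ), (0 : ℤ)) = a := by
        ext <;> simp [Prod.fst_add, Prod.snd_add] <;> omega
      simp only [hb']
      exact Sym2.eq_swap
    · refine ⟨(a, (0, 1)), by simp [Finset.mem_product, ha], ?_⟩
      have hb' : a + ((0 : ℤ), (1 : ℤ)) = b := by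
        ext <;> simp [Prod.fst_add, Prod.snd_add] <;> omega
      simp only [hb']
    · refine ⟨(b, (0, 1)), by simp [Finset.mem_product, hb], ?_⟩
      have hb' : b + ((0 : ℤ), (1 : ℤ)) = a := by
        ext <;> simp [Prod.fst_add, Prod.snd_add] <;> omega
      simp only [hb']
      exact Sym2.eq_swap
  calc (En n).card ≤ _ := Finset.card_le_card hsub
    _ ≤ (Lam n ×ˢ ({((1 : ℤ), (0 : ℤ)), ((0 : ℤ), (1 : ℤ))} : Finset V)).card :=
        Finset.card_image_le
    _ ≤ 2 * n ^ 2 := by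
        rw [Finset.card_product, card_Lam]
        have h2 : ({((1 : ℤ), (0 : ℤ)), ((0 : ℤ), (1 : ℤ))} : Finset V).card ≤ 2 :=
          (Finset.card_insert_le _ _).trans (by simp)
        nlinarith

lemma choose_le_pow' (m k : ℕ) : m.choose k ≤ m ^ k := by
  induction m generalizing k with
  | zero =>
    cases k with
    | zero => simp
    | succ k => simp [Nat.choose_eq_zero_of_lt]
  | succ m ih =>
    cases k with
    | zero => simp
    | succ k =>
      rw [Nat.choose_succ_succ]
      calc m.choose k + m.choose (k + 1) ≤ m ^ k + m ^ k * m := by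
            have h1 := ih k
            have h2 := ih (k + 1)
            rw [pow_succ] at h2
            omega
        _ = m ^ k * (m + 1) := by ring
        _ ≤ (m + 1) ^ k * (m + 1) :=
            Nat.mul_le_mul_right _ (Nat.pow_le_pow_left (Nat.le_succ m) k)
        _ = (m + 1) ^ (k + 1) := by rw [pow_succ]

lemma sum_choose_le' (m N : ℕ) : ∑ k ∈ Finset.range (N + 1), m.choose k ≤ (m + 1) ^ N := by
  induction N with
  | zero => simp
  | succ N ih =>
    rw [Finset.sum_range_succ]
    calc (∑ k ∈ Finset.range (N + 1), m.choose k) + m.choose (N + 1)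
        ≤ (m + 1) ^ N + m ^ (N + 1) := Nat.add_le_add ih (choose_le_pow' m (N + 1))
      _ ≤ (m + 1) ^ N + m * (m + 1) ^ N := by
          have : m ^ (N + 1) ≤ m * (m + 1) ^ N := by
            rw [pow_succ, mul_comm]
            exact Nat.mul_le_mul_left m (Nat.pow_le_pow_left (Nat.le_succ m) N)
          omega
      _ = (m + 1) ^ (N + 1) := by ring

lemma card_small_subsets_le {n N : ℕ} (hn : 1 ≤ n) :
    ((En n).powerset.filter fun S => S.card ≤ N).card ≤ (3 * n ^ 2) ^ N := by
  classical
  have hsub : ((En n).powerset.filter fun S => S.card ≤ N)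
      ⊆ (Finset.range (N + 1)).biUnion (fun k => (En n).powersetCard k) := by
    intro S hS
    rw [Finset.mem_filter, Finset.mem_powerset] at hS
    rw [Finset.mem_biUnion]
    exact ⟨S.card, Finset.mem_range.mpr (by omega), Finset.mem_powersetCard.mpr ⟨hS.1, rfl⟩⟩
  calc ((En n).powerset.filter fun S => S.card ≤ N).card
      ≤ ((Finset.range (N + 1)).biUnion (fun k => (En n).powersetCard k)).card :=
        Finset.card_le_card hsub
    _ ≤ ∑ k ∈ Finset.range (N + 1), ((En n).powersetCard k).card :=
        Finset.card_biUnion_le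
    _ = ∑ k ∈ Finset.range (N + 1), (En n).card.choose k := by
        simp [Finset.card_powersetCard]
    _ ≤ ((En n).card + 1) ^ N := sum_choose_le' _ _
    _ ≤ (3 * n ^ 2) ^ N := by
        apply Nat.pow_le_pow_left
        have h1 := card_En_le n
        have h2 : 1 ≤ n ^ 2 := Nat.one_le_pow _ _ (by omega)
        omega

/-- Preimage-counting: the fiber of `ψ` over `b` has at most `(3n²)^N` elements. -/
lemma fiber_card_le {n N : ℕ} (hn : 1 ≤ n) (A : Set Cfg) (H : Cfg → Finset (Sym2 V))
    (hHsub : ∀ ω ∈ A, H ω ⊆ En n) (hHcard : ∀ ω ∈ A, (H ω).card ≤ N) (b : Cfg) :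
    (((CfgSet n).filter (· ∈ A)).filter fun ω => closeE ω (H ω) = b).card
      ≤ (3 * n ^ 2) ^ N := by
  classical
  refine le_trans (Finset.card_le_card_of_injOn
    (fun ω => (En n).filter fun e => ω e ≠ b e) ?_ ?_) (card_small_subsets_le hn)
  · intro ω hω
    simp only [Finset.mem_coe, Finset.mem_filter] at hω
    obtain ⟨⟨hωC, hωA⟩, hψ⟩ := hω
    rw [Finset.mem_coe, Finset.mem_filter, Finset.mem_powerset]
    refine ⟨Finset.filter_subset _ _, ?_⟩
    have hDsub : ((En n).filter fun e => ω e ≠ b e) ⊆ H ω := by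
      intro e he
      rw [Finset.mem_filter] at he
      by_contra hne
      apply he.2
      have : closeE ω (H ω) e = ω e := by unfold closeE; rw [if_neg hne]
      rw [← this, hψ]
    exact le_trans (Finset.card_le_card hDsub) (hHcard ω hωA)
  · intro ω₁ hω₁ ω₂ hω₂ hD
    simp only [Finset.coe_filter, Set.mem_setOf_eq, Finset.mem_filter] at hω₁ hω₂
    obtain ⟨⟨h1C, h1A⟩, h1ψ⟩ := hω₁
    obtain ⟨⟨h2C, h2A⟩, h2ψ⟩ := hω₂
    replace hD : ((En n).filter fun e => ω₁ e ≠ b e) = ((En n).filter fun e => ω₂ e ≠ b e) := hD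
    funext e
    by_cases he : e ∈ En n
    · by_cases hd : ω₁ e = b e
      · have : e ∉ (En n).filter fun e => ω₁ e ≠ b e := by simp [hd]
        rw [hD] at this
        simp only [Finset.mem_filter, not_and, not_not] at this
        rw [hd, this he]
      · have : e ∈ (En n).filter fun e => ω₁ e ≠ b e := by simp [he, hd]
        rw [hD] at this
        simp only [Finset.mem_filter] at this
        cases h1 : ω₁ e <;> cases h2 : ω₂ e <;> cases hb : b e <;> simp_all
    · rw [mem_CfgSet_iff.mp h1C e he, mem_CfgSet_iff.mp h2C e he]



/-- Cost of closing edges in the random-cluster model: if `H` assigns to each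
configuration `ω ∈ A` a set of at most `N` edges of the box, and `ψ(ω) = ω_{H(ω)}`,
then `φ¹_{n,p,q}(ψ(A)) ≥ φ¹_{n,p,q}(A)·[min(p,1-p)/(3p|Λ(n)|)]^N` with `|Λ(n)| = n²`. -/
theorem stmt13 (n : ℕ) (hn : 1 ≤ n) (p q : ℝ) (hp0 : 0 < p) (hp1 : p < 1) (hq : 1 ≤ q)
    (N : ℕ) (A : Set Cfg) (hA : A ⊆ ↑(CfgSet n))
    (H : Cfg → Finset (Sym2 V))
    (hHsub : ∀ ω ∈ A, H ω ⊆ En n) (hHcard : ∀ ω ∈ A, (H ω).card ≤ N) :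
    rcProb n p q true A * (min p (1 - p) / (3 * p * (n : ℝ) ^ 2)) ^ N
      ≤ rcProb n p q true ((fun ω => closeE ω (H ω)) '' A) := by
  classical
  have hq0 : (0 : ℝ) < q := lt_of_lt_of_le one_pos hq
  have hn0 : (0 : ℝ) < (n : ℝ) := by exact_mod_cast Nat.lt_of_lt_of_le Nat.zero_lt_one hn
  have hK : (0 : ℝ) < 3 * (n : ℝ) ^ 2 := by positivity
  have hmin : 0 < min p (1 - p) := lt_min hp0 (by linarith)
  set ψ : Cfg → Cfg := fun ω => closeE ω (H ω) with hψdef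
  set w : Cfg → ℝ := rcWeight n p q true with hwdef
  have hwpos : ∀ ω, 0 < w ω := fun ω => rcWeight_pos hp0 hp1 hq true ω
  have hZpos : 0 < ∑ ω ∈ CfgSet n, w ω :=
    Finset.sum_pos (fun ω _ => hwpos ω) (cfgSet_nonempty n)
  set T : Finset Cfg := (CfgSet n).filter (· ∈ A) with hTdef
  set T' : Finset Cfg := (CfgSet n).filter (· ∈ ψ '' A) with hT'def
  rw [rcProb, rcProb, div_mul_eq_mul_div, div_le_div_iff₀ hZpos hZpos]
  apply mul_le_mul_of_nonneg_right _ hZpos.le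
  -- numerator inequality
  have hc : min p (1 - p) / (3 * p * (n : ℝ) ^ 2)
      = (min p (1 - p) / p) / (3 * (n : ℝ) ^ 2) := by
    rw [div_div]; ring_nf
  have hKN : (0 : ℝ) < (3 * (n : ℝ) ^ 2) ^ N := pow_pos hK _
  have key1 : ∀ ω ∈ T, w ω * (min p (1 - p) / p) ^ N ≤ w (ψ ω) := by
    intro ω hω
    rw [hTdef, Finset.mem_filter] at hω
    exact weight_closeE_ge hp0 hp1 hq (hHsub ω hω.2) (hHcard ω hω.2)
  have hmaps : ∀ ω ∈ T, ψ ω ∈ T' := by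
    intro ω hω
    rw [hTdef, Finset.mem_filter] at hω
    rw [hT'def, Finset.mem_filter]
    exact ⟨closeE_mem_CfgSet hω.1 (H ω), ⟨ω, hω.2, rfl⟩⟩
  have key2 : ∑ ω ∈ T, w (ψ ω) ≤ (3 * (n : ℝ) ^ 2) ^ N * ∑ b ∈ T', w b := by
    rw [← Finset.sum_fiberwise_of_maps_to hmaps (fun ω => w (ψ ω)), Finset.mul_sum]
    apply Finset.sum_le_sum
    intro b _
    have hfib : ∑ ω ∈ T.filter (fun ω => ψ ω = b), w (ψ ω)
        = ((T.filter (fun ω => ψ ω = b)).card : ℝ) * w b := by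
      rw [Finset.sum_congr rfl (fun ω hω => by rw [(Finset.mem_filter.mp hω).2]),
        Finset.sum_const, nsmul_eq_mul]
    rw [hfib]
    apply mul_le_mul_of_nonneg_right _ (hwpos b).le
    have hcard := fiber_card_le (N := N) hn A H hHsub hHcard b
    calc ((T.filter (fun ω => ψ ω = b)).card : ℝ)
        ≤ ((3 * n ^ 2) ^ N : ℕ) := by exact_mod_cast hcard
      _ = (3 * (n : ℝ) ^ 2) ^ N := by push_cast; ring
  calc (∑ ω ∈ T, w ω) * (min p (1 - p) / (3 * p * (n : ℝ) ^ 2)) ^ N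
      = (∑ ω ∈ T, w ω * (min p (1 - p) / p) ^ N) / (3 * (n : ℝ) ^ 2) ^ N := by
        rw [hc, div_pow, Finset.sum_mul, Finset.sum_div]
        apply Finset.sum_congr rfl
        intro ω _
        rw [mul_div_assoc]
    _ ≤ (∑ ω ∈ T, w (ψ ω)) / (3 * (n : ℝ) ^ 2) ^ N := by
        exact div_le_div_of_nonneg_right (Finset.sum_le_sum key1) hKN.le
    _ ≤ ∑ b ∈ T', w b := by
        rw [div_le_iff₀ hKN, mul_comm]
        exact key2


end
end
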